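/- In the balls-in-bins model, let b, n ≥ 1 be integers, set μ := E[C(b,n)], and suppose μ > 0. Then for every t > 0: P(C(b,n) − μ ≤ −t) ≤ exp(−t²/(2μ)) and P(C(b,n) − μ ≥ t) ≤ exp(−t²/(2μ + t)). -/

import Mathlib

open MeasureTheory ProbabilityTheory Filter Topology
open scoped ENNReal NNReal

/-- Number of collisions after `b` throws, `C(b,n) = b - |{X_1,…,X_b}|`. -/
def collisions {Ω : Type*} (X : ℕ → Ω → ℕ) (b : ℕ) (ω : Ω) : ℕ :=
  b - ((Finset.range b).image fun i => X i ω).card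

/-- `B(c,n) = inf { b : C(b,n) ≥ c }` in the balls-in-bins model. -/
noncomputable def ballsB {Ω : Type*} (X : ℕ → Ω → ℕ) (c : ℕ) (ω : Ω) : ℕ :=
  sInf {b : ℕ | c ≤ collisions X b ω}

/-- The uniform distribution on the bins `{1, …, n}`, as a measure on `ℕ`. -/
noncomputable def unifBins (n : ℕ) : Measure ℕ :=
  ((n : ℝ≥0∞))⁻¹ • ∑ k ∈ Finset.Icc 1 n, Measure.dirac k

namespace CollisionsAux

/-! ### Elementary exponential inequalities -/

lemma exp_neg_le_quad {x : ℝ} (hx : 0 ≤ x) : Real.exp (-x) ≤ 1 - x + x ^ 2 / 2 := by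
  have hder : ∀ y : ℝ, HasDerivAt (fun y : ℝ => 1 - y + y ^ 2 / 2 - Real.exp (-y))
      (-1 + y + Real.exp (-y)) y := by
    intro y
    have h1 : HasDerivAt (fun y : ℝ => Real.exp (-y)) (Real.exp (-y) * (-1)) y :=
      HasDerivAt.exp (hasDerivAt_id y).neg
    have h2 : HasDerivAt (fun y : ℝ => y ^ 2) (((2 : ℕ) : ℝ) * y ^ 1) y := hasDerivAt_pow 2 y
    have h3 := (((hasDerivAt_const y (1:ℝ)).sub (hasDerivAt_id y)).add (h2.div_const 2)).sub h1
    refine h3.congr_deriv ?_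
    push_cast
    ring
  have hdiff : Differentiable ℝ (fun y : ℝ => 1 - y + y ^ 2 / 2 - Real.exp (-y)) :=
    fun y => (hder y).differentiableAt
  have hmono : MonotoneOn (fun y : ℝ => 1 - y + y ^ 2 / 2 - Real.exp (-y)) (Set.Ici 0) := by
    refine monotoneOn_of_deriv_nonneg (convex_Ici 0) hdiff.continuous.continuousOn
      hdiff.differentiableOn ?_
    intro y _
    rw [(hder y).deriv]
    have := Real.add_one_le_exp (-y)
    linarith
  have h0 := hmono (Set.mem_Ici.2 le_rfl) (Set.mem_Ici.2 hx) hx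
  norm_num at h0
  linarith

lemma exp_quad_upper {x : ℝ} (hx : 0 ≤ x) :
    (2 - x) * (Real.exp x - 1 - x) ≤ x ^ 2 := by
  have hder : ∀ y : ℝ, HasDerivAt (fun y : ℝ => y ^ 2 - (2 - y) * (Real.exp y - 1 - y))
      (((2 : ℕ) : ℝ) * y ^ 1 -
        ((0 - 1) * (Real.exp y - 1 - y) + (2 - y) * (Real.exp y - 0 - 1))) y := by
    intro y
    exact (hasDerivAt_pow 2 y).sub
      (((hasDerivAt_const y (2:ℝ)).sub (hasDerivAt_id y)).mul
        (((Real.hasDerivAt_exp y).sub (hasDerivAt_const y 1)).sub (hasDerivAt_id y)))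
  have hdiff : Differentiable ℝ (fun y : ℝ => y ^ 2 - (2 - y) * (Real.exp y - 1 - y)) :=
    fun y => (hder y).differentiableAt
  have hmono : MonotoneOn (fun y : ℝ => y ^ 2 - (2 - y) * (Real.exp y - 1 - y)) (Set.Ici 0) := by
    refine monotoneOn_of_deriv_nonneg (convex_Ici 0) hdiff.continuous.continuousOn
      hdiff.differentiableOn ?_
    intro y _
    rw [(hder y).deriv]
    have h1 := Real.add_one_le_exp (-y)
    have h2 : Real.exp (-y) * Real.exp y = 1 := by
      rw [← Real.exp_add]; simp
    have h3 := Real.exp_pos y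
    have hkey := mul_le_mul_of_nonneg_right h1 h3.le
    rw [h2] at hkey
    push_cast
    nlinarith [hkey]
  have h0 := hmono (Set.mem_Ici.2 le_rfl) (Set.mem_Ici.2 hx) hx
  norm_num at h0
  linarith

/-- The pointwise Chebyshev-association inequality used in the induction step. -/
lemma assoc_pointwise (lam c mv kr nr : ℝ) (hnr : 0 < nr) :
    Real.exp (lam * c) * (1 + (Real.exp lam - 1) * ((kr - c) / nr))
      ≤ (1 + (Real.exp lam - 1) * ((kr - mv) / nr)) * Real.exp (lam * c)
        + Real.exp (lam * mv) * ((Real.exp lam - 1) * ((mv - c) / nr)) := by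
  have hprod : (Real.exp (lam * c) - Real.exp (lam * mv))
      * ((Real.exp lam - 1) * (mv - c)) ≤ 0 := by
    rcases le_total lam 0 with hl | hl <;> rcases le_total c mv with hc | hc
    · have h1 : Real.exp (lam * mv) ≤ Real.exp (lam * c) :=
        Real.exp_le_exp.2 (by nlinarith)
      have h2 : Real.exp lam ≤ 1 := by
        rw [← Real.exp_zero]; exact Real.exp_le_exp.2 hl
      exact mul_nonpos_of_nonneg_of_nonpos (by linarith)
        (mul_nonpos_of_nonpos_of_nonneg (by linarith) (by linarith))
    · have h1 : Real.exp (lam * c) ≤ Real.exp (lam * mv) :=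
        Real.exp_le_exp.2 (by nlinarith)
      have h2 : Real.exp lam ≤ 1 := by
        rw [← Real.exp_zero]; exact Real.exp_le_exp.2 hl
      have h3 : (0:ℝ) ≤ (Real.exp lam - 1) * (mv - c) := by nlinarith
      exact mul_nonpos_of_nonpos_of_nonneg (by linarith) h3
    · have h1 : Real.exp (lam * c) ≤ Real.exp (lam * mv) :=
        Real.exp_le_exp.2 (by nlinarith)
      have h2 : (1:ℝ) ≤ Real.exp lam := by
        rw [← Real.exp_zero]; exact Real.exp_le_exp.2 hl
      exact mul_nonpos_of_nonpos_of_nonneg (by linarith)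
        (mul_nonneg (by linarith) (by linarith))
    · have h1 : Real.exp (lam * mv) ≤ Real.exp (lam * c) :=
        Real.exp_le_exp.2 (by nlinarith)
      have h2 : (1:ℝ) ≤ Real.exp lam := by
        rw [← Real.exp_zero]; exact Real.exp_le_exp.2 hl
      exact mul_nonpos_of_nonneg_of_nonpos (by linarith)
        (mul_nonpos_of_nonneg_of_nonpos (by linarith) (by linarith))
  have hinv : (0:ℝ) ≤ nr⁻¹ := inv_nonneg.2 hnr.le
  have h := mul_nonpos_of_nonpos_of_nonneg hprod hinv
  have hgoal : (1 + (Real.exp lam - 1) * ((kr - mv) / nr)) * Real.exp (lam * c)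
        + Real.exp (lam * mv) * ((Real.exp lam - 1) * ((mv - c) / nr))
      - Real.exp (lam * c) * (1 + (Real.exp lam - 1) * ((kr - c) / nr))
      = -(((Real.exp (lam * c) - Real.exp (lam * mv))
          * ((Real.exp lam - 1) * (mv - c))) * nr⁻¹) := by
    field_simp
    ring
  linarith [hgoal, h]

section Main

variable {Ω : Type*} [MeasurableSpace Ω] (μ : Measure Ω) [IsProbabilityMeasure μ]
  (n : ℕ) (X : ℕ → Ω → ℕ)

/-- The tuple of the first `k` throws. -/
def tupA (k : ℕ) : Ω → ({x // x ∈ Finset.range k} → ℕ) := fun ω i => X i ω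

lemma meas_tupA (hmeas : ∀ i, Measurable (X i)) (k : ℕ) : Measurable (tupA X k) :=
  measurable_pi_lambda _ fun i => hmeas i

/-- The set of occupied bins, as a function of the tuple. -/
def tupSet (k : ℕ) (a : {x // x ∈ Finset.range k} → ℕ) : Finset ℕ := Finset.univ.image a

lemma tupSet_eq (k : ℕ) (ω : Ω) :
    tupSet k (tupA X k ω) = (Finset.range k).image fun i => X i ω := by
  ext y
  constructor
  · intro h
    rcases Finset.mem_image.1 h with ⟨i, -, rfl⟩
    exact Finset.mem_image.2 ⟨i, i.2, rfl⟩
  · intro h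
    rcases Finset.mem_image.1 h with ⟨i, hi, rfl⟩
    exact Finset.mem_image.2 ⟨⟨i, hi⟩, Finset.mem_univ _, rfl⟩

lemma tupSet_card_le (k : ℕ) (a : {x // x ∈ Finset.range k} → ℕ) : (tupSet k a).card ≤ k := by
  refine Finset.card_image_le.trans ?_
  simp [Finset.card_univ]

lemma card_le (k : ℕ) (ω : Ω) : ((Finset.range k).image fun i => X i ω).card ≤ k := by
  rw [← tupSet_eq X k ω]
  exact tupSet_card_le k _

lemma coll_cast (k : ℕ) (ω : Ω) :
    (collisions X k ω : ℝ) = (k : ℝ) - (((Finset.range k).image fun i => X i ω).card : ℝ) := by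
  rw [collisions, Nat.cast_sub (card_le X k ω)]

lemma coll_le (k : ℕ) (ω : Ω) : (collisions X k ω : ℝ) ≤ (k : ℝ) := by
  rw [coll_cast]
  have : (0:ℝ) ≤ (((Finset.range k).image fun i => X i ω).card : ℝ) := Nat.cast_nonneg _
  linarith

lemma coll_nonneg (k : ℕ) (ω : Ω) : (0:ℝ) ≤ (collisions X k ω : ℝ) := Nat.cast_nonneg _

lemma meas_coll (hmeas : ∀ i, Measurable (X i)) (k : ℕ) :
    Measurable fun ω => (collisions X k ω : ℝ) := by
  have heq : (fun ω => (collisions X k ω : ℝ))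
      = (fun a => ((k - (tupSet k a).card : ℕ) : ℝ)) ∘ tupA X k := by
    funext ω
    simp only [Function.comp_apply, tupSet_eq, collisions]
  rw [heq]
  exact (measurable_of_countable _).comp (meas_tupA X hmeas k)

lemma int_bdd {f : Ω → ℝ} (hf : Measurable f) (M : ℝ) (hM : ∀ ω, |f ω| ≤ M) :
    Integrable f μ :=
  Integrable.mono' (integrable_const M) hf.aestronglyMeasurable
    (ae_of_all _ fun ω => by simpa [Real.norm_eq_abs] using hM ω)

lemma int_coll (hmeas : ∀ i, Measurable (X i)) (k : ℕ) :
    Integrable (fun ω => (collisions X k ω : ℝ)) μ :=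
  int_bdd μ (meas_coll X hmeas k) k fun ω => by
    rw [abs_of_nonneg (coll_nonneg X k ω)]; exact coll_le X k ω

lemma meas_expcoll (hmeas : ∀ i, Measurable (X i)) (lam : ℝ) (k : ℕ) :
    Measurable fun ω => Real.exp (lam * (collisions X k ω : ℝ)) :=
  Real.measurable_exp.comp ((meas_coll X hmeas k).const_mul lam)

lemma expcoll_le (lam : ℝ) (k : ℕ) (ω : Ω) :
    |Real.exp (lam * (collisions X k ω : ℝ))| ≤ Real.exp (|lam| * k) := by
  rw [Real.abs_exp]
  apply Real.exp_le_exp.2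
  calc lam * (collisions X k ω : ℝ) ≤ |lam * (collisions X k ω : ℝ)| := le_abs_self _
    _ = |lam| * |(collisions X k ω : ℝ)| := abs_mul _ _
    _ ≤ |lam| * k := by
        apply mul_le_mul_of_nonneg_left _ (abs_nonneg lam)
        rw [abs_of_nonneg (coll_nonneg X k ω)]
        exact coll_le X k ω

lemma int_expcoll (hmeas : ∀ i, Measurable (X i)) (lam : ℝ) (k : ℕ) :
    Integrable (fun ω => Real.exp (lam * (collisions X k ω : ℝ))) μ :=
  int_bdd μ (meas_expcoll X hmeas lam k) (Real.exp (|lam| * k)) (expcoll_le X lam k)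

lemma ae_mem_Icc (hmeas : ∀ i, Measurable (X i)) (hunif : ∀ i, μ.map (X i) = unifBins n) :
    ∀ᵐ ω ∂μ, ∀ i, X i ω ∈ Finset.Icc 1 n := by
  rw [ae_all_iff]
  intro i
  have hset : MeasurableSet {y : ℕ | y ∉ Finset.Icc 1 n} :=
    Set.Countable.measurableSet (Set.to_countable _)
  have hz : (unifBins n) {y : ℕ | y ∉ Finset.Icc 1 n} = 0 := by
    rw [unifBins, Measure.smul_apply, Measure.finset_sum_apply]
    have h1 : ∀ k ∈ Finset.Icc 1 n, Measure.dirac k {y : ℕ | y ∉ Finset.Icc 1 n} = 0 := by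
      intro k hk
      rw [Measure.dirac_apply]
      simp [Set.indicator_apply, Finset.mem_Icc.mp hk]
    rw [Finset.sum_congr rfl h1]
    simp
  have hmap : μ {ω | X i ω ∉ Finset.Icc 1 n} = 0 := by
    have := Measure.map_apply (hmeas i) hset (μ := μ)
    rw [hunif i, hz] at this
    exact this.symm ▸ rfl
  rw [ae_iff]
  exact hmap

lemma unif_singleton (hn : 1 ≤ n) {y : ℕ} (hy : y ∈ Finset.Icc 1 n) :
    unifBins n {y} = ((n : ℝ≥0∞))⁻¹ := by
  rw [unifBins, Measure.smul_apply, Measure.finset_sum_apply]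
  have h1 : ∀ k ∈ Finset.Icc 1 n, Measure.dirac k ({y} : Set ℕ)
      = if k = y then 1 else 0 := by
    intro k _
    rw [Measure.dirac_apply]
    simp [Set.indicator_apply]
  rw [Finset.sum_congr rfl h1,
    Finset.sum_ite_eq' (Finset.Icc 1 n) y (fun _ => (1:ℝ≥0∞)), if_pos hy]
  simp

lemma indep_k (hindep : iIndepFun X μ)
    (hmeas : ∀ i, Measurable (X i)) (k : ℕ) :
    IndepFun (tupA X k) (X k) μ := by
  have hdisj : Disjoint (Finset.range k) ({k} : Finset ℕ) := by
    simp [Finset.disjoint_singleton_right]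
  have h := hindep.indepFun_finset (Finset.range k) {k} hdisj hmeas
  have h2 := h.comp measurable_id
    (measurable_pi_apply (⟨k, Finset.mem_singleton_self k⟩ : ({k} : Finset ℕ)))
  exact h2

/-- Key conditioning identity: integrating out the `k`-th throw. -/
lemma key (hindep : iIndepFun X μ)
    (hmeas : ∀ i, Measurable (X i)) (hunif : ∀ i, μ.map (X i) = unifBins n)
    (hn : 1 ≤ n) (k : ℕ) (H : ({x // x ∈ Finset.range k} → ℕ) → ℕ → ℝ) (M : ℝ)
    (hM : ∀ a y, |H a y| ≤ M) :
    ∫ ω, H (tupA X k ω) (X k ω) ∂μ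
      = ∫ ω, (n:ℝ)⁻¹ * ∑ y ∈ Finset.Icc 1 n, H (tupA X k ω) y ∂μ := by
  have hmeasH : ∀ y : ℕ, Measurable fun ω => H (tupA X k ω) y := by
    intro y
    exact (measurable_of_countable (fun a => H a y)).comp (meas_tupA X hmeas k)
  have hintH : ∀ y : ℕ, Integrable (fun ω => H (tupA X k ω) y) μ := fun y =>
    int_bdd μ (hmeasH y) M fun ω => hM _ _
  have hmeasI : ∀ y : ℕ, Measurable fun ω => (if X k ω = y then (1:ℝ) else 0) := by
    intro y
    exact Measurable.ite (hmeas k (measurableSet_singleton y)) measurable_const measurable_const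
  have hintI : ∀ y : ℕ, Integrable (fun ω => (if X k ω = y then (1:ℝ) else 0)) μ := fun y =>
    int_bdd μ (hmeasI y) 1 fun ω => by split <;> norm_num
  have hintP : ∀ y ∈ Finset.Icc 1 n,
      Integrable (fun ω => (if X k ω = y then (1:ℝ) else 0) * H (tupA X k ω) y) μ := by
    intro y _
    refine int_bdd μ ((hmeasI y).mul (hmeasH y)) M fun ω => ?_
    rw [abs_mul]
    calc |if X k ω = y then (1:ℝ) else 0| * |H (tupA X k ω) y|
        ≤ 1 * M := by
          refine mul_le_mul ?_ (hM _ _) (abs_nonneg _) one_pos.le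
          split <;> norm_num
      _ = M := one_mul M
  have hae := ae_mem_Icc μ n X hmeas hunif
  have step1 : ∫ ω, H (tupA X k ω) (X k ω) ∂μ
      = ∫ ω, ∑ y ∈ Finset.Icc 1 n,
          (if X k ω = y then (1:ℝ) else 0) * H (tupA X k ω) y ∂μ := by
    refine integral_congr_ae ?_
    filter_upwards [hae] with ω hω
    rw [Finset.sum_eq_single_of_mem (X k ω) (hω k)]
    · simp
    · intro y _ hy
      simp [Ne.symm hy, fun h : X k ω = y => hy h.symm]
  rw [step1, integral_finset_sum _ hintP]
  have step2 : ∀ y ∈ Finset.Icc 1 n,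
      ∫ ω, (if X k ω = y then (1:ℝ) else 0) * H (tupA X k ω) y ∂μ
        = (n:ℝ)⁻¹ * ∫ ω, H (tupA X k ω) y ∂μ := by
    intro y hy
    have hIF : IndepFun (fun ω => (if X k ω = y then (1:ℝ) else 0))
        (fun ω => H (tupA X k ω) y) μ := by
      have h := ((indep_k μ X hindep hmeas k).symm.comp
        (measurable_of_countable (fun x : ℕ => if x = y then (1:ℝ) else 0))
        (measurable_of_countable (fun a => H a y)))
      exact h
    have hprod := hIF.integral_mul_eq_mul_integral (hintI y).1 (hintH y).1
    have hI : ∫ ω, (if X k ω = y then (1:ℝ) else 0) ∂μ = (n:ℝ)⁻¹ := by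
      have hms : MeasurableSet (X k ⁻¹' {y}) := hmeas k (measurableSet_singleton y)
      have h1 : ∫ ω, (if X k ω = y then (1:ℝ) else 0) ∂μ
          = ∫ ω, Set.indicator (X k ⁻¹' {y}) (1 : Ω → ℝ) ω ∂μ := by
        refine integral_congr_ae (ae_of_all _ fun ω => ?_)
        by_cases h : X k ω = y <;>
          simp [Set.indicator_apply, Set.mem_preimage, h]
      rw [h1, integral_indicator_one hms]
      have h2 : μ (X k ⁻¹' {y}) = (μ.map (X k)) {y} := by
        rw [Measure.map_apply (hmeas k) (measurableSet_singleton y)]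
      rw [Measure.real, h2, hunif k, unif_singleton n hn hy, ENNReal.toReal_inv]
      simp
    calc ∫ ω, (if X k ω = y then (1:ℝ) else 0) * H (tupA X k ω) y ∂μ
        = (∫ ω, (if X k ω = y then (1:ℝ) else 0) ∂μ) * ∫ ω, H (tupA X k ω) y ∂μ := by
          have heq : (fun ω => (if X k ω = y then (1:ℝ) else 0) * H (tupA X k ω) y)
              = (fun ω => (if X k ω = y then (1:ℝ) else 0))
                * (fun ω => H (tupA X k ω) y) := rfl
          rw [heq, hprod]
      _ = (n:ℝ)⁻¹ * ∫ ω, H (tupA X k ω) y ∂μ := by rw [hI]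
  rw [Finset.sum_congr rfl step2, ← Finset.mul_sum,
    ← integral_finset_sum _ (fun y _ => hintH y), ← integral_const_mul]

lemma coll_succ (k : ℕ) (ω : Ω) :
    (collisions X (k+1) ω : ℝ)
      = ((k:ℝ) - (((Finset.range k).image fun i => X i ω).card : ℝ))
        + (if X k ω ∈ (Finset.range k).image fun i => X i ω then (1:ℝ) else 0) := by
  have himg : ((Finset.range (k+1)).image fun i => X i ω)
      = insert (X k ω) ((Finset.range k).image fun i => X i ω) := by
    rw [Finset.range_add_one, Finset.image_insert]
  rw [coll_cast, himg]
  by_cases h : X k ω ∈ (Finset.range k).image fun i => X i ω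
  · rw [Finset.insert_eq_self.2 h]
    simp only [h, if_true]
    push_cast
    ring
  · rw [Finset.card_insert_of_notMem h]
    simp only [h, if_false]
    push_cast
    ring

lemma mean_succ (hindep : iIndepFun X μ)
    (hmeas : ∀ i, Measurable (X i)) (hunif : ∀ i, μ.map (X i) = unifBins n)
    (hn : 1 ≤ n) (k : ℕ) :
    ∫ ω, (collisions X (k+1) ω : ℝ) ∂μ
      = (∫ ω, (collisions X k ω : ℝ) ∂μ)
        + ((k:ℝ) - ∫ ω, (collisions X k ω : ℝ) ∂μ) / n := by
  set H : ({x // x ∈ Finset.range k} → ℕ) → ℕ → ℝ := fun a y =>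
    ((k:ℝ) - ((tupSet k a).card : ℝ)) + (if y ∈ tupSet k a then (1:ℝ) else 0) with hH
  have hb : ∀ a y, |H a y| ≤ (k:ℝ) + 1 := by
    intro a y
    have h2 : (0:ℝ) ≤ ((tupSet k a).card : ℝ) := Nat.cast_nonneg _
    have h3 : ((tupSet k a).card : ℝ) ≤ k := by exact_mod_cast tupSet_card_le k a
    have h4 : (0:ℝ) ≤ (if y ∈ tupSet k a then (1:ℝ) else 0) := by split <;> norm_num
    have h5 : (if y ∈ tupSet k a then (1:ℝ) else 0) ≤ 1 := by split <;> norm_num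
    rw [abs_le]
    constructor <;> simp only [hH] <;> linarith
  have hkey := key μ n X hindep hmeas hunif hn k H ((k:ℝ)+1) hb
  have hL : ∀ ω, H (tupA X k ω) (X k ω) = (collisions X (k+1) ω : ℝ) := by
    intro ω
    simp only [hH, tupSet_eq]
    exact (coll_succ X k ω).symm
  have hstep : ∫ ω, (collisions X (k+1) ω : ℝ) ∂μ
      = ∫ ω, (n:ℝ)⁻¹ * ∑ y ∈ Finset.Icc 1 n, H (tupA X k ω) y ∂μ := by
    refine Eq.trans ?_ hkey
    exact integral_congr_ae (ae_of_all _ fun ω => (hL ω).symm)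
  have hsum : ∀ᵐ ω ∂μ, (n:ℝ)⁻¹ * ∑ y ∈ Finset.Icc 1 n, H (tupA X k ω) y
      = (collisions X k ω : ℝ) + ((k:ℝ) - (collisions X k ω : ℝ)) / n := by
    filter_upwards [ae_mem_Icc μ n X hmeas hunif] with ω hω
    have hsub : tupSet k (tupA X k ω) ⊆ Finset.Icc 1 n := by
      rw [tupSet_eq]
      intro y hy
      rcases Finset.mem_image.1 hy with ⟨i, _, rfl⟩
      exact hω i
    have hcoll : (collisions X k ω : ℝ) = (k:ℝ) - ((tupSet k (tupA X k ω)).card : ℝ) := by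
      rw [tupSet_eq]; exact coll_cast X k ω
    have hsplit : ∑ y ∈ Finset.Icc 1 n, (if y ∈ tupSet k (tupA X k ω) then (1:ℝ) else 0)
        = ((tupSet k (tupA X k ω)).card : ℝ) := by
      rw [Finset.sum_boole, Finset.filter_mem_eq_inter, Finset.inter_eq_right.2 hsub]
    have hcard : (Finset.Icc 1 n).card = n := by rw [Nat.card_Icc]; omega
    have hn0 : (n:ℝ) ≠ 0 := Nat.cast_ne_zero.2 (by omega)
    simp only [hH]
    rw [Finset.sum_add_distrib, hsplit, Finset.sum_const, hcard, nsmul_eq_mul]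
    rw [hcoll]
    field_simp
    ring
  have hint2 : Integrable (fun ω => ((k:ℝ) - (collisions X k ω : ℝ)) / n) μ :=
    ((integrable_const ((k:ℝ))).sub (int_coll μ X hmeas k)).div_const n
  rw [hstep, integral_congr_ae hsum, integral_add (int_coll μ X hmeas k) hint2]
  congr 1
  rw [integral_div, integral_sub (integrable_const _) (int_coll μ X hmeas k), integral_const]
  simp

lemma mgf_succ (hindep : iIndepFun X μ)
    (hmeas : ∀ i, Measurable (X i)) (hunif : ∀ i, μ.map (X i) = unifBins n)
    (hn : 1 ≤ n) (lam : ℝ) (k : ℕ) :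
    ∫ ω, Real.exp (lam * (collisions X (k+1) ω : ℝ)) ∂μ
      = ∫ ω, Real.exp (lam * (collisions X k ω : ℝ))
          * (1 + (Real.exp lam - 1) * (((k:ℝ) - (collisions X k ω : ℝ)) / n)) ∂μ := by
  set H : ({x // x ∈ Finset.range k} → ℕ) → ℕ → ℝ := fun a y =>
    Real.exp (lam * (((k:ℝ) - ((tupSet k a).card : ℝ))
      + (if y ∈ tupSet k a then (1:ℝ) else 0))) with hH
  have hb : ∀ a y, |H a y| ≤ Real.exp (|lam| * ((k:ℝ)+1)) := by
    intro a y
    have h2 : (0:ℝ) ≤ ((tupSet k a).card : ℝ) := Nat.cast_nonneg _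
    have h3 : ((tupSet k a).card : ℝ) ≤ k := by exact_mod_cast tupSet_card_le k a
    have h4 : (0:ℝ) ≤ (if y ∈ tupSet k a then (1:ℝ) else 0) := by split <;> norm_num
    have h5 : (if y ∈ tupSet k a then (1:ℝ) else 0) ≤ 1 := by split <;> norm_num
    simp only [hH]
    rw [Real.abs_exp]
    apply Real.exp_le_exp.2
    calc lam * (((k:ℝ) - ((tupSet k a).card : ℝ)) + (if y ∈ tupSet k a then (1:ℝ) else 0))
        ≤ |lam * (((k:ℝ) - ((tupSet k a).card : ℝ))
            + (if y ∈ tupSet k a then (1:ℝ) else 0))| := le_abs_self _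
      _ = |lam| * |((k:ℝ) - ((tupSet k a).card : ℝ))
            + (if y ∈ tupSet k a then (1:ℝ) else 0)| := abs_mul _ _
      _ ≤ |lam| * ((k:ℝ)+1) := by
          apply mul_le_mul_of_nonneg_left _ (abs_nonneg lam)
          rw [abs_of_nonneg (by linarith)]
          linarith
  have hkey := key μ n X hindep hmeas hunif hn k H (Real.exp (|lam| * ((k:ℝ)+1))) hb
  have hL : ∀ ω, H (tupA X k ω) (X k ω) = Real.exp (lam * (collisions X (k+1) ω : ℝ)) := by
    intro ω
    simp only [hH, tupSet_eq]
    rw [← coll_succ X k ω]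
  have hstep : ∫ ω, Real.exp (lam * (collisions X (k+1) ω : ℝ)) ∂μ
      = ∫ ω, (n:ℝ)⁻¹ * ∑ y ∈ Finset.Icc 1 n, H (tupA X k ω) y ∂μ := by
    refine Eq.trans ?_ hkey
    exact integral_congr_ae (ae_of_all _ fun ω => (hL ω).symm)
  have hsum : ∀ᵐ ω ∂μ, (n:ℝ)⁻¹ * ∑ y ∈ Finset.Icc 1 n, H (tupA X k ω) y
      = Real.exp (lam * (collisions X k ω : ℝ))
          * (1 + (Real.exp lam - 1) * (((k:ℝ) - (collisions X k ω : ℝ)) / n)) := by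
    filter_upwards [ae_mem_Icc μ n X hmeas hunif] with ω hω
    have hsub : tupSet k (tupA X k ω) ⊆ Finset.Icc 1 n := by
      rw [tupSet_eq]
      intro y hy
      rcases Finset.mem_image.1 hy with ⟨i, _, rfl⟩
      exact hω i
    have hcoll : (collisions X k ω : ℝ) = (k:ℝ) - ((tupSet k (tupA X k ω)).card : ℝ) := by
      rw [tupSet_eq]; exact coll_cast X k ω
    have hterm : ∀ y ∈ Finset.Icc 1 n, H (tupA X k ω) y
        = (if y ∈ tupSet k (tupA X k ω) then
            Real.exp (lam * ((k:ℝ) - ((tupSet k (tupA X k ω)).card : ℝ))) * Real.exp lam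
          else Real.exp (lam * ((k:ℝ) - ((tupSet k (tupA X k ω)).card : ℝ)))) := by
      intro y _
      simp only [hH]
      by_cases h : y ∈ tupSet k (tupA X k ω)
      · simp only [h, if_true]
        rw [mul_add, mul_one, Real.exp_add]
      · simp only [h, if_false]
        rw [add_zero]
    have hcard : (Finset.Icc 1 n).card = n := by rw [Nat.card_Icc]; omega
    have hsn : (tupSet k (tupA X k ω)).card ≤ n := by
      rw [← hcard]; exact Finset.card_le_card hsub
    have hn0 : (n:ℝ) ≠ 0 := Nat.cast_ne_zero.2 (by omega)
    rw [Finset.sum_congr rfl hterm, Finset.sum_ite, Finset.sum_const, Finset.sum_const,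
      Finset.filter_mem_eq_inter, Finset.inter_eq_right.2 hsub,
      ← Finset.sdiff_eq_filter, Finset.card_sdiff_of_subset hsub, hcard]
    rw [hcoll]
    rw [nsmul_eq_mul, nsmul_eq_mul, Nat.cast_sub hsn]
    field_simp
    ring
  rw [hstep]
  exact integral_congr_ae hsum

lemma mgf_bound (hindep : iIndepFun X μ)
    (hmeas : ∀ i, Measurable (X i)) (hunif : ∀ i, μ.map (X i) = unifBins n)
    (hn : 1 ≤ n) (lam : ℝ) :
    ∀ k : ℕ, ∫ ω, Real.exp (lam * (collisions X k ω : ℝ)) ∂μ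
      ≤ Real.exp ((∫ ω, (collisions X k ω : ℝ) ∂μ) * (Real.exp lam - 1)) := by
  intro k
  induction k with
  | zero =>
    have h0 : ∀ ω : Ω, collisions X 0 ω = 0 := fun ω => by simp [collisions]
    simp [h0]
  | succ k ih =>
    have hnpos : (0:ℝ) < n := by
      have : (0:ℕ) < n := by omega
      exact_mod_cast this
    have hn0 : (n:ℝ) ≠ 0 := hnpos.ne'
    set mk := ∫ ω, (collisions X k ω : ℝ) ∂μ with hmk
    set A : ℝ := 1 + (Real.exp lam - 1) * (((k:ℝ) - mk) / n) with hA
    set Ec : ℝ := Real.exp (lam * mk) with hEc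
    -- integrands
    have hmeas1 : Measurable (fun ω => Real.exp (lam * (collisions X k ω : ℝ))
        * (1 + (Real.exp lam - 1) * (((k:ℝ) - (collisions X k ω : ℝ)) / n))) :=
      (meas_expcoll X hmeas lam k).mul
        (measurable_const.add
          (((measurable_const.sub (meas_coll X hmeas k)).div_const n).const_mul _))
    have hbd2 : ∀ ω, |1 + (Real.exp lam - 1) * (((k:ℝ) - (collisions X k ω : ℝ)) / n)|
        ≤ 1 + |Real.exp lam - 1| * ((k:ℝ)/n) := by
      intro ω
      have hC1 : (0:ℝ) ≤ (k:ℝ) - (collisions X k ω : ℝ) := by linarith [coll_le X k ω]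
      have habs : |((k:ℝ) - (collisions X k ω : ℝ))/n| ≤ (k:ℝ)/n := by
        rw [abs_of_nonneg (div_nonneg hC1 hnpos.le), div_eq_mul_inv, div_eq_mul_inv]
        exact mul_le_mul_of_nonneg_right (by linarith [coll_nonneg X k ω])
          (inv_nonneg.2 hnpos.le)
      calc |1 + (Real.exp lam - 1) * (((k:ℝ) - (collisions X k ω : ℝ)) / n)|
          ≤ |(1:ℝ)| + |(Real.exp lam - 1) * (((k:ℝ) - (collisions X k ω : ℝ)) / n)| :=
            abs_add_le _ _
        _ = 1 + |Real.exp lam - 1| * |((k:ℝ) - (collisions X k ω : ℝ))/n| := by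
            rw [abs_one, abs_mul]
        _ ≤ 1 + |Real.exp lam - 1| * ((k:ℝ)/n) := by
            have := mul_le_mul_of_nonneg_left habs (abs_nonneg (Real.exp lam - 1))
            linarith
    have hint1 : Integrable (fun ω => Real.exp (lam * (collisions X k ω : ℝ))
        * (1 + (Real.exp lam - 1) * (((k:ℝ) - (collisions X k ω : ℝ)) / n))) μ := by
      refine int_bdd μ hmeas1
        (Real.exp (|lam| * k) * (1 + |Real.exp lam - 1| * ((k:ℝ)/n))) fun ω => ?_
      rw [abs_mul]
      exact mul_le_mul (expcoll_le X lam k ω) (hbd2 ω) (abs_nonneg _) (Real.exp_pos _).le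
    have hint2a : Integrable (fun ω => A * Real.exp (lam * (collisions X k ω : ℝ))) μ :=
      (int_expcoll μ X hmeas lam k).const_mul A
    have hint2b : Integrable (fun ω => (mk - (collisions X k ω : ℝ)) / n) μ :=
      ((integrable_const mk).sub (int_coll μ X hmeas k)).div_const n
    have hint2c : Integrable
        (fun ω => Ec * ((Real.exp lam - 1) * ((mk - (collisions X k ω : ℝ)) / n))) μ :=
      (hint2b.const_mul _).const_mul _
    have hint2 : Integrable (fun ω => A * Real.exp (lam * (collisions X k ω : ℝ))
        + Ec * ((Real.exp lam - 1) * ((mk - (collisions X k ω : ℝ)) / n))) μ :=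
      hint2a.add hint2c
    have hmono : ∫ ω, Real.exp (lam * (collisions X k ω : ℝ))
          * (1 + (Real.exp lam - 1) * (((k:ℝ) - (collisions X k ω : ℝ)) / n)) ∂μ
        ≤ ∫ ω, A * Real.exp (lam * (collisions X k ω : ℝ))
          + Ec * ((Real.exp lam - 1) * ((mk - (collisions X k ω : ℝ)) / n)) ∂μ := by
      refine integral_mono hint1 hint2 fun ω => ?_
      exact assoc_pointwise lam ((collisions X k ω : ℝ)) mk (k:ℝ) n hnpos
    have hRHS : ∫ ω, A * Real.exp (lam * (collisions X k ω : ℝ))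
          + Ec * ((Real.exp lam - 1) * ((mk - (collisions X k ω : ℝ)) / n)) ∂μ
        = A * ∫ ω, Real.exp (lam * (collisions X k ω : ℝ)) ∂μ := by
      rw [integral_add hint2a hint2c, integral_const_mul, integral_const_mul, integral_const_mul,
        integral_div, integral_sub (integrable_const mk) (int_coll μ X hmeas k), integral_const]
      simp [← hmk]
    have hAle : A ≤ Real.exp ((Real.exp lam - 1) * (((k:ℝ) - mk) / n)) := by
      rw [hA]
      linarith [Real.add_one_le_exp ((Real.exp lam - 1) * (((k:ℝ) - mk) / n))]
    have hphinn : 0 ≤ ∫ ω, Real.exp (lam * (collisions X k ω : ℝ)) ∂μ :=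
      integral_nonneg fun ω => (Real.exp_pos _).le
    calc ∫ ω, Real.exp (lam * (collisions X (k+1) ω : ℝ)) ∂μ
        = ∫ ω, Real.exp (lam * (collisions X k ω : ℝ))
            * (1 + (Real.exp lam - 1) * (((k:ℝ) - (collisions X k ω : ℝ)) / n)) ∂μ :=
          mgf_succ μ n X hindep hmeas hunif hn lam k
      _ ≤ A * ∫ ω, Real.exp (lam * (collisions X k ω : ℝ)) ∂μ := by rw [← hRHS]; exact hmono
      _ ≤ Real.exp ((Real.exp lam - 1) * (((k:ℝ) - mk) / n))
            * ∫ ω, Real.exp (lam * (collisions X k ω : ℝ)) ∂μ :=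
          mul_le_mul_of_nonneg_right hAle hphinn
      _ ≤ Real.exp ((Real.exp lam - 1) * (((k:ℝ) - mk) / n))
            * Real.exp (mk * (Real.exp lam - 1)) :=
          mul_le_mul_of_nonneg_left ih (Real.exp_pos _).le
      _ = Real.exp ((∫ ω, (collisions X (k+1) ω : ℝ) ∂μ) * (Real.exp lam - 1)) := by
          rw [← Real.exp_add]
          congr 1
          rw [mean_succ μ n X hindep hmeas hunif hn k, ← hmk]
          ring

end Main

end CollisionsAux

theorem stmt_18 {Ω : Type*} [MeasurableSpace Ω] (μ : Measure Ω) [IsProbabilityMeasure μ]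
    (n b : ℕ) (hn : 1 ≤ n) (hb : 1 ≤ b)
    (X : ℕ → Ω → ℕ) (hmeas : ∀ i, Measurable (X i))
    (hindep : iIndepFun X μ)
    (hunif : ∀ i, μ.map (X i) = unifBins n)
    (m : ℝ) (hm : m = ∫ ω, (collisions X b ω : ℝ) ∂μ) (hmpos : 0 < m) :
    ∀ t : ℝ, 0 < t →
      (μ {ω | (collisions X b ω : ℝ) - m ≤ -t}).toReal ≤ Real.exp (-t ^ 2 / (2 * m)) ∧
      (μ {ω | t ≤ (collisions X b ω : ℝ) - m}).toReal ≤ Real.exp (-t ^ 2 / (2 * m + t)) := by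
  intro t ht
  have hm0 : m ≠ 0 := ne_of_gt hmpos
  have hintexp : ∀ lam : ℝ,
      Integrable (fun ω => Real.exp (lam * (collisions X b ω : ℝ))) μ :=
    fun lam => CollisionsAux.int_expcoll μ X hmeas lam b
  have hmgf : ∀ lam : ℝ, mgf (fun ω => (collisions X b ω : ℝ)) μ lam
      ≤ Real.exp (m * (Real.exp lam - 1)) := by
    intro lam
    have h := CollisionsAux.mgf_bound μ n X hindep hmeas hunif hn lam b
    rw [← hm] at h
    exact h
  constructor
  · -- lower tail
    have hv : (0:ℝ) < t/m := div_pos ht hmpos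
    have hset : {ω : Ω | (collisions X b ω : ℝ) - m ≤ -t}
        = {ω : Ω | (collisions X b ω : ℝ) ≤ m - t} := by
      ext ω
      simp only [Set.mem_setOf_eq]
      constructor <;> intro h <;> linarith
    rw [hset]
    have hmarkov := measure_le_le_exp_mul_mgf (μ := μ)
      (X := fun ω => (collisions X b ω : ℝ)) (m - t) (t := -(t/m)) (by linarith) (hintexp _)
    refine le_trans hmarkov ?_
    have hstep := mul_le_mul_of_nonneg_left (hmgf (-(t/m)))
      (Real.exp_pos (-(-(t/m)) * (m - t))).le
    refine le_trans hstep ?_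
    rw [← Real.exp_add]
    apply Real.exp_le_exp.2
    have hq := CollisionsAux.exp_neg_le_quad (x := t/m) hv.le
    have h1 : m * (Real.exp (-(t/m)) - 1) ≤ m * (-(t/m) + (t/m)^2/2) :=
      mul_le_mul_of_nonneg_left (by linarith) hmpos.le
    have h2 : -(-(t/m)) * (m - t) + m * (-(t/m) + (t/m)^2/2) = -t^2/(2*m) := by
      field_simp
      ring
    linarith
  · -- upper tail
    have hD : (0:ℝ) < 2*m + t := by linarith
    have hD0 : (2*m + t) ≠ 0 := ne_of_gt hD
    obtain ⟨v, hvdef⟩ : ∃ v : ℝ, v = 2*t/(2*m+t) := ⟨_, rfl⟩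
    have hvpos : 0 < v := by rw [hvdef]; exact div_pos (by linarith) hD
    have hset : {ω : Ω | t ≤ (collisions X b ω : ℝ) - m}
        = {ω : Ω | m + t ≤ (collisions X b ω : ℝ)} := by
      ext ω
      simp only [Set.mem_setOf_eq]
      constructor <;> intro h <;> linarith
    rw [hset]
    have hmarkov := measure_ge_le_exp_mul_mgf (μ := μ)
      (X := fun ω => (collisions X b ω : ℝ)) (m + t) hvpos.le (hintexp v)
    refine le_trans hmarkov ?_
    have hstep := mul_le_mul_of_nonneg_left (hmgf v) (Real.exp_pos (-v * (m + t))).le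
    refine le_trans hstep ?_
    rw [← Real.exp_add]
    apply Real.exp_le_exp.2
    have haux := CollisionsAux.exp_quad_upper (x := v) hvpos.le
    have hvD : v * (2*m+t) = 2*t := by rw [hvdef]; field_simp
    have hA : (2 - v) * (2*m+t) = 4*m := by rw [hvdef]; field_simp; ring
    have h1 : 4*m*(Real.exp v - 1 - v) ≤ 2*t*v := by
      calc 4*m*(Real.exp v - 1 - v)
          = ((2 - v)*(2*m+t))*(Real.exp v - 1 - v) := by rw [hA]
        _ = ((2 - v)*(Real.exp v - 1 - v))*(2*m+t) := by ring
        _ ≤ v^2*(2*m+t) := mul_le_mul_of_nonneg_right haux hD.le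
        _ = (v*(2*m+t))*v := by ring
        _ = 2*t*v := by rw [hvD]
    have h3 : 4*m*v + 2*t*v = 4*t := by
      rw [show 4*m*v + 2*t*v = 2*(v*(2*m+t)) by ring, hvD]
      ring
    have hE : m * (Real.exp v - 1) ≤ t := by nlinarith [h1, h3]
    rw [neg_div, ← sub_nonneg]
    have h6 := mul_le_mul_of_nonneg_right hE hD.le
    have h7 : v*(m+t)*(2*m+t) = 2*t*(m+t) := by
      rw [show v*(m+t)*(2*m+t) = (v*(2*m+t))*(m+t) by ring, hvD]
    have h8 : (0:ℝ) ≤ (-(t^2/(2*m+t)) - (-v * (m + t) + m * (Real.exp v - 1))) * (2*m+t) := by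
      have hc : t^2/(2*m+t) * (2*m+t) = t^2 := div_mul_cancel₀ _ hD0
      nlinarith [h6, h7, hc]
    nlinarith [mul_pos hD (show (0:ℝ) < 1 by norm_num), h8, hD]
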